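/- There exists a constant K with 0 < K < π such that for all 0 < r ≤ K, for all integers n, and for all z with |z| ≤ r and z ≠ 0: (1/(2|z|)) ≤ |e^{(2n+1)πi + z}/(e^{(2n+1)πi + z} + 1)| ≤ 2/|z|. Consequently, writing φ(w) = e^w/(e^w+1): the image under φ of the union of punctured balls ⋃ₙ (B((2n+1)πi, r) \ {(2n+1)πi}) is contained in ℂ \ B(0, 1/(2r)), and the image under φ of ℂ \ ⋃ₙ B((2n+1)πi, r) is contained in B(0, 2/r). -/

import Mathlib

open Metric Set Complex

lemma aux_exp_shift (n : ℤ) (z : ℂ) :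
    Complex.exp ((2 * (n : ℂ) + 1) * Real.pi * Complex.I + z) = -Complex.exp z := by
  have h : (2 * (n : ℂ) + 1) * Real.pi * Complex.I + z
      = (n : ℂ) * (2 * Real.pi * Complex.I) + (Real.pi * Complex.I + z) := by ring
  rw [h, Complex.exp_add, Complex.exp_int_mul_two_pi_mul_I, one_mul, Complex.exp_add,
    Complex.exp_pi_mul_I, neg_one_mul]

lemma aux_norm_phi (a : ℂ) : ‖(-a) / (-a + 1)‖ = ‖a‖ / ‖a - 1‖ := by
  have h : -a + 1 = -(a - 1) := by ring
  rw [h, norm_div, norm_neg, norm_neg]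

lemma key_small (z : ℂ) (hz0 : z ≠ 0) (hz : ‖z‖ ≤ 1/5) :
    1 / (2 * ‖z‖) ≤ ‖Complex.exp z‖ / ‖Complex.exp z - 1‖ ∧
    ‖Complex.exp z‖ / ‖Complex.exp z - 1‖ ≤ (31/20) / ‖z‖ := by
  have hs0 : 0 < ‖z‖ := norm_pos_iff.mpr hz0
  have h1 : ‖Complex.exp z - 1 - z‖ ≤ ‖z‖^2 := by
    have h := Complex.norm_exp_sub_one_sub_id_le (x := z)
      (by linarith)
    exact h
  set a := ‖Complex.exp z - 1‖ with ha
  set b := ‖Complex.exp z‖ with hb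
  have habs : ‖z‖ = ‖z‖ := rfl
  have ha1 : a ≤ ‖z‖ + ‖z‖^2 := by
    have h := norm_add_le (Complex.exp z - 1 - z) z
    simp only [sub_add_cancel] at h
    rw [ha]; rw [habs] at h; linarith
  have ha2 : ‖z‖ - ‖z‖^2 ≤ a := by
    have h := norm_add_le (z - (Complex.exp z - 1)) (Complex.exp z - 1)
    simp only [sub_add_cancel] at h
    have h2 : ‖z - (Complex.exp z - 1)‖ = ‖Complex.exp z - 1 - z‖ := by
      rw [← norm_neg]; ring_nf
    rw [habs, h2] at h
    linarith
  have hzsq : ‖z‖^2 ≤ (1/5) * ‖z‖ := by nlinarith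
  have haL : (4/5) * ‖z‖ ≤ a := by nlinarith
  have haU : a ≤ (6/5) * ‖z‖ := by nlinarith
  have ha0 : 0 < a := by nlinarith
  have hb1 : b ≤ 1 + a := by
    have h := norm_add_le (Complex.exp z - 1) 1
    simp only [map_one, norm_one, sub_add_cancel] at h
    rw [hb, ha]; linarith
  have hb2 : 1 - a ≤ b := by
    have h := norm_add_le (Complex.exp z) (1 - Complex.exp z)
    have h2 : ‖1 - Complex.exp z‖ = a := by
      rw [ha, ← norm_neg]; ring_nf
    simp only [add_sub_cancel] at h
    rw [h2] at h
    simp at h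
    linarith
  have haub : a ≤ 6/25 := by nlinarith
  constructor
  · rw [div_le_div_iff₀ (by linarith) ha0]
    nlinarith
  · rw [div_le_div_iff₀ ha0 hs0]
    nlinarith


lemma key_far (z : ℂ) (hIm : |z.im| ≤ Real.pi) (hz : 1/5 < ‖z‖) :
    ‖Complex.exp z‖ ≤ 30 * ‖Complex.exp z - 1‖ := by
  set x := z.re with hx
  set y := z.im with hy
  have hbe : ‖Complex.exp z‖ = Real.exp x := Complex.norm_exp z
  set a := ‖Complex.exp z - 1‖ with ha
  have ha0 : 0 ≤ a := norm_nonneg _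
  have hexp10 : (11:ℝ)/10 ≤ Real.exp (1/10) := by
    have := Real.add_one_le_exp (1/10 : ℝ); linarith
  rcases le_or_gt (1/10 : ℝ) x with hx1 | hx1
  · -- right half: exp x large
    have h1 : Real.exp x - 1 ≤ a := by
      have h := norm_add_le (Complex.exp z - 1) 1
      simp only [sub_add_cancel, map_one, norm_one] at h
      rw [hbe] at h; linarith
    have h2 : (11:ℝ)/10 ≤ Real.exp x := le_trans hexp10 (Real.exp_le_exp.mpr hx1)
    linarith
  rcases le_or_gt x (-(1/10) : ℝ) with hx2 | hx2
  · -- left half: exp x small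
    have h1 : 1 - Real.exp x ≤ a := by
      have h := norm_add_le (Complex.exp z) (1 - Complex.exp z)
      have h2 : ‖1 - Complex.exp z‖ = a := by
        rw [ha, ← norm_neg]; ring_nf
      simp only [add_sub_cancel, map_one, norm_one] at h
      rw [h2, hbe] at h; linarith
    have h2 : Real.exp x ≤ 10/11 := by
      have h3 : Real.exp x ≤ Real.exp (-(1/10)) := Real.exp_le_exp.mpr hx2
      rw [Real.exp_neg] at h3
      have h4 : (Real.exp (1/10))⁻¹ ≤ 10/11 := by
        rw [inv_le_comm₀ (Real.exp_pos _) (by norm_num)]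
        linarith
      linarith
    linarith
  · -- middle strip: |x| < 1/10
    have hy2 : (3:ℝ)/100 < y^2 := by
      have hnsq : ‖z‖^2 = x^2 + y^2 := by
        rw [Complex.sq_norm, Complex.normSq_apply]; ring
      nlinarith [norm_nonneg z]
    have hx0 : 0 < Real.exp x := Real.exp_pos x
    have hre : (Complex.exp z - 1).re = Real.exp x * Real.cos y - 1 := by
      simp [Complex.exp_re]; rfl
    have him : (Complex.exp z - 1).im = Real.exp x * Real.sin y := by
      simp [Complex.exp_im]; rfl
    rcases le_or_gt (Real.cos y) 0 with hc | hc
    · -- cos y ≤ 0 : |exp z - 1| ≥ exp x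
      have hsq : a^2 = (Real.exp x)^2 - 2*Real.exp x*Real.cos y + 1 := by
        rw [ha, Complex.sq_norm, Complex.normSq_apply, hre, him]
        nlinarith [Real.sin_sq_add_cos_sq y]
      nlinarith [sq_nonneg (a - Real.exp x), sq_nonneg (a + Real.exp x)]
    · -- cos y > 0 : |y| < π/2, use imaginary part
      have hpi : (0:ℝ) < Real.pi := Real.pi_pos
      have hyh : |y| < Real.pi/2 := by
        by_contra h
        push_neg at h
        have : Real.cos |y| ≤ 0 :=
          Real.cos_nonpos_of_pi_div_two_le_of_le h (by linarith)
        rw [Real.cos_abs] at this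
        linarith
      have hy17 : (17:ℝ)/100 < |y| := by nlinarith [abs_nonneg y, _root_.sq_abs y]
      have hsin : (1:ℝ)/8 ≤ Real.sin |y| := by
        rcases le_or_gt (|y|) 1 with h1 | h1
        · have h := Real.sin_gt_sub_cube (x := |y|) (by linarith)
          have h3 : |y|^3 ≤ |y| := by
            calc |y|^3 = |y| * |y|^2 := by ring
              _ ≤ |y| * 1 := by
                  have h4 : |y|^2 ≤ 1 := by nlinarith [abs_nonneg y]
                  exact mul_le_mul_of_nonneg_left h4 (abs_nonneg y)
              _ = |y| := mul_one _
          linarith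
        · have hm := Real.sin_le_sin_of_le_of_le_pi_div_two
            (x := 1) (y := |y|) (by linarith) (le_of_lt hyh) (le_of_lt h1)
          have h := Real.sin_gt_sub_cube (one_pos)
          norm_num at h
          linarith
      have hyle : -Real.pi ≤ y ∧ y ≤ Real.pi := abs_le.mp hIm
      have habs2 : |Real.sin y| = Real.sin |y| := by
        rcases le_or_gt 0 y with h | h
        · rw [_root_.abs_of_nonneg h,
            _root_.abs_of_nonneg (Real.sin_nonneg_of_nonneg_of_le_pi h hyle.2)]
        · rw [_root_.abs_of_neg h, Real.sin_neg,
            _root_.abs_of_nonpos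
              (Real.sin_nonpos_of_nonpos_of_neg_pi_le (le_of_lt h) hyle.1)]
      have hIm2 : Real.exp x * Real.sin |y| ≤ a := by
        have h := Complex.abs_im_le_norm (Complex.exp z - 1)
        rw [him, abs_mul, _root_.abs_of_pos hx0, habs2, ← ha] at h
        exact h
      have h5 : Real.exp x * (1/8) ≤ Real.exp x * Real.sin |y| :=
        mul_le_mul_of_nonneg_left hsin (le_of_lt hx0)
      rw [hbe]
      linarith
theorem exp_map_near_poles_estimate :
    ∃ K : ℝ, 0 < K ∧ K < Real.pi ∧ ∀ r : ℝ, 0 < r → r ≤ K →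
      (∀ n : ℤ, ∀ z : ℂ, z ≠ 0 → ‖z‖ ≤ r →
        1 / (2 * ‖z‖) ≤
          ‖Complex.exp ((2 * (n : ℂ) + 1) * Real.pi * Complex.I + z) /
            (Complex.exp ((2 * (n : ℂ) + 1) * Real.pi * Complex.I + z) + 1)‖ ∧
        ‖Complex.exp ((2 * (n : ℂ) + 1) * Real.pi * Complex.I + z) /
            (Complex.exp ((2 * (n : ℂ) + 1) * Real.pi * Complex.I + z) + 1)‖ ≤ 2 / ‖z‖) ∧
      (∀ w : ℂ,
        (∃ n : ℤ, w ∈ Metric.ball ((2 * (n : ℂ) + 1) * Real.pi * Complex.I) r ∧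
          w ≠ (2 * (n : ℂ) + 1) * Real.pi * Complex.I) →
        Complex.exp w / (Complex.exp w + 1) ∉ Metric.ball (0 : ℂ) (1 / (2 * r))) ∧
      (∀ w : ℂ,
        (∀ n : ℤ, w ∉ Metric.ball ((2 * (n : ℂ) + 1) * Real.pi * Complex.I) r) →
        Complex.exp w / (Complex.exp w + 1) ∈ Metric.ball (0 : ℂ) (2 / r)) := by
  have hpi := Real.pi_gt_three
  refine ⟨1/20, by norm_num, by linarith, ?_⟩
  intro r hr hrK
  refine ⟨?_, ?_, ?_⟩
  · -- part 1
    intro n z hz0 hzr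
    have hz5 : ‖z‖ ≤ 1/5 := le_trans hzr (by linarith)
    have hs0 : 0 < ‖z‖ := norm_pos_iff.mpr hz0
    rw [aux_exp_shift n z, aux_norm_phi (Complex.exp z)]
    obtain ⟨h1, h2⟩ := key_small z hz0 hz5
    refine ⟨h1, le_trans h2 ?_⟩
    gcongr
    norm_num
  · -- part 2
    rintro w ⟨n, hw, hwne⟩
    set c : ℂ := (2 * (n : ℂ) + 1) * Real.pi * Complex.I with hc
    set z : ℂ := w - c with hzdef
    have hz0 : z ≠ 0 := sub_ne_zero.mpr hwne
    have hzr : ‖z‖ ≤ r := by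
      rw [Metric.mem_ball, dist_eq_norm] at hw
      exact le_of_lt hw
    have hz5 : ‖z‖ ≤ 1/5 := le_trans hzr (by linarith)
    have hwz : w = c + z := by rw [hzdef]; ring
    have hexp : Complex.exp w = -Complex.exp z := by
      rw [hwz, hc]; exact aux_exp_shift n z
    intro hmem
    rw [mem_ball_zero_iff, hexp, aux_norm_phi] at hmem
    obtain ⟨h1, _⟩ := key_small z hz0 hz5
    have hs0 : 0 < ‖z‖ := norm_pos_iff.mpr hz0
    have hmono : 1/(2*r) ≤ 1/(2*‖z‖) :=
      one_div_le_one_div_of_le (by linarith) (by linarith)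
    linarith
  · -- part 3
    intro w hw
    have hpi0 := Real.pi_pos
    have h2pi : (0:ℝ) < 2 * Real.pi := by linarith
    set n : ℤ := ⌊w.im / (2 * Real.pi)⌋ with hn
    have hfl : (n : ℝ) ≤ w.im / (2 * Real.pi) := Int.floor_le _
    have hfu : w.im / (2 * Real.pi) < (n : ℝ) + 1 := Int.lt_floor_add_one _
    have hlo : (n : ℝ) * (2 * Real.pi) ≤ w.im := (le_div_iff₀ h2pi).mp hfl
    have hhi : w.im < ((n : ℝ) + 1) * (2 * Real.pi) := (div_lt_iff₀ h2pi).mp hfu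
    set c : ℂ := (2 * (n : ℂ) + 1) * Real.pi * Complex.I with hc
    set z : ℂ := w - c with hzdef
    have hcim : c.im = (2 * (n:ℝ) + 1) * Real.pi := by
      rw [hc]; simp
    have hzim : |z.im| ≤ Real.pi := by
      have hz : z.im = w.im - (2*(n:ℝ)+1)*Real.pi := by
        rw [hzdef, Complex.sub_im, hcim]
      rw [hz, abs_le]
      constructor <;> nlinarith
    have hzr : r ≤ ‖z‖ := by
      have h := hw n
      rw [Metric.mem_ball, dist_eq_norm] at h
      exact not_lt.mp h
    have hwz : w = c + z := by rw [hzdef]; ring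
    have hexp : Complex.exp w = -Complex.exp z := by
      rw [hwz, hc]; exact aux_exp_shift n z
    rw [mem_ball_zero_iff, hexp, aux_norm_phi]
    rcases le_or_gt ‖z‖ (1/5) with h5 | h5
    · have hz0 : z ≠ 0 := by
        intro h
        rw [h, norm_zero] at hzr
        linarith
      obtain ⟨_, h2⟩ := key_small z hz0 h5
      have hmono : (31/20:ℝ)/‖z‖ ≤ (31/20)/r := by gcongr
      have hlt : (31/20:ℝ)/r < 2/r := by gcongr; norm_num
      linarith
    · have hfar := key_far z hzim h5
      have hb0 : 0 < ‖Complex.exp z‖ := by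
        rw [Complex.norm_exp]; exact Real.exp_pos _
      have ha0 : 0 < ‖Complex.exp z - 1‖ := by nlinarith
      have h30 : ‖Complex.exp z‖ / ‖Complex.exp z - 1‖ ≤ 30 := by
        rw [div_le_iff₀ ha0]; linarith
      have h40 : (40:ℝ) ≤ 2/r := by
        rw [le_div_iff₀ hr]; linarith
      linarith
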